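/- Let $A_1, \ldots, A_p$ be bounded convex polytopes in a $(p+q)$-dimensional real vector space $P$, and let $B_1, \ldots, B_q$ be bounded convex polytopes contained in a $q$-dimensional linear subspace $Q \subseteq P$. Let $\pi : P \to P/Q$ denote the quotient projection. Then $(p+q)!\,\mathrm{Vol}_{p+q}(A_1,\ldots,A_p,B_1,\ldots,B_q) = p!\,q!\,\mathrm{Vol}_p(\pi A_1,\ldots,\pi A_p)\cdot \mathrm{Vol}_q(B_1,\ldots,B_q)$, where the volume forms on $P$, $Q$, and $P/Q$ are chosen compatibly. -/

import Mathlib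

open Pointwise MeasureTheory

/-- `MV` is the mixed volume of bounded convex bodies:
symmetric, Minkowski-additive in each argument, with diagonal values the volume. -/
def IsMixedVolume {E : Type*} [NormedAddCommGroup E] [NormedSpace ℝ E] [MeasureSpace E]
    {m : ℕ} (MV : (Fin m → Set E) → ℝ) : Prop :=
  (∀ (σ : Equiv.Perm (Fin m)) (C : Fin m → Set E), MV (C ∘ σ) = MV C) ∧
  (∀ (C : Fin m → Set E) (i : Fin m) (D D' : Set E),
      (∀ j, Convex ℝ (C j) ∧ IsCompact (C j) ∧ (C j).Nonempty) →
      Convex ℝ D → IsCompact D → D.Nonempty →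
      Convex ℝ D' → IsCompact D' → D'.Nonempty →
      MV (Function.update C i (D + D')) =
        MV (Function.update C i D) + MV (Function.update C i D')) ∧
  (∀ C : Set E, Convex ℝ C → IsCompact C → C.Nonempty →
      MV (fun _ => C) = (volume C).toReal)

namespace MixedVolAux

variable {E : Type*} [NormedAddCommGroup E] [NormedSpace ℝ E] [MeasureSpace E]

/-- The coercion `ConvexBody E → Set E` as an `AddMonoidHom`. -/
def cbHom : ConvexBody E →+ Set E where
  toFun K := ↑K
  map_zero' := ConvexBody.coe_zero
  map_add' := ConvexBody.coe_add

@[simp] lemma cbHom_apply (K : ConvexBody E) : (cbHom K : Set E) = ↑K := rfl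

variable {m : ℕ} {MV : (Fin m → Set E) → ℝ}

lemma bodies (C : Fin m → ConvexBody E) :
    ∀ j, Convex ℝ ((C j : Set E)) ∧ IsCompact ((C j : Set E)) ∧ (C j : Set E).Nonempty :=
  fun j => ⟨(C j).convex, (C j).isCompact, (C j).nonempty⟩

lemma coe_update [DecidableEq (Fin m)] (C : Fin m → ConvexBody E) (i : Fin m) (X : ConvexBody E) :
    (fun j => ((Function.update C i X j : ConvexBody E) : Set E))
      = Function.update (fun j => (C j : Set E)) i (X : Set E) := by
  funext j
  rcases eq_or_ne j i with rfl | hj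
  · simp
  · simp [Function.update_of_ne hj]

lemma update_add (h : IsMixedVolume MV) [inst : DecidableEq (Fin m)] (C : Fin m → ConvexBody E)
    (i : Fin m) (D D' : ConvexBody E) :
    MV (fun j => ((Function.update C i (D + D') j : ConvexBody E) : Set E))
      = MV (fun j => ((Function.update C i D j : ConvexBody E) : Set E))
        + MV (fun j => ((Function.update C i D' j : ConvexBody E) : Set E)) := by
  obtain rfl : inst = instDecidableEqFin m := Subsingleton.elim _ _
  rw [coe_update, coe_update, coe_update, ConvexBody.coe_add]
  exact h.2.1 _ i _ _ (bodies C) D.convex D.isCompact D.nonempty D'.convex D'.isCompact D'.nonempty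

lemma update_zero (h : IsMixedVolume MV) [DecidableEq (Fin m)] (C : Fin m → ConvexBody E)
    (i : Fin m) :
    MV (fun j => ((Function.update C i 0 j : ConvexBody E) : Set E)) = 0 := by
  have h0 := update_add h C i 0 0
  rw [add_zero] at h0
  linarith

/-- `MV` as a ℕ-multilinear map on convex bodies. -/
noncomputable def mvMap (h : IsMixedVolume MV) :
    MultilinearMap ℕ (fun _ : Fin m => ConvexBody E) ℝ where
  toFun C := MV fun i => ↑(C i)
  map_update_add' C i D D' := update_add h C i D D'
  map_update_smul' C i c D := by
    show MV (fun j => ((Function.update C i (c • D) j : ConvexBody E) : Set E))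
      = c • MV (fun j => ((Function.update C i D j : ConvexBody E) : Set E))
    induction c with
    | zero => simpa using update_zero h C i
    | succ n ih =>
        rw [succ_nsmul, update_add h C i (n • D) D, ih, succ_nsmul]

lemma mvMap_apply (h : IsMixedVolume MV) (C : Fin m → ConvexBody E) :
    mvMap h C = MV fun i => ↑(C i) := rfl

lemma signsum {k : ℕ} (T : Finset (Fin k)) :
    ∑ S ∈ Finset.univ.filter (fun S => T ⊆ S), (-1 : ℝ) ^ (k - S.card)
      = if T = Finset.univ then 1 else 0 := by
  classical
  have h1 : ∑ S ∈ Finset.univ.filter (fun S => T ⊆ S), (-1 : ℝ) ^ (k - S.card)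
      = ∑ V ∈ Tᶜ.powerset, (-1 : ℝ) ^ V.card := by
    refine Finset.sum_nbij' (fun S => Sᶜ) (fun V => Vᶜ) ?_ ?_ ?_ ?_ ?_
    · intro S hS
      rw [Finset.mem_filter] at hS
      rw [Finset.mem_powerset]
      exact Finset.compl_subset_compl.mpr hS.2
    · intro V hV
      rw [Finset.mem_powerset] at hV
      rw [Finset.mem_filter]
      exact ⟨Finset.mem_univ _, by simpa using Finset.compl_subset_compl.mpr hV⟩
    · intro S _; simp
    · intro V _; simp
    · intro S _
      congr 1
      rw [Finset.card_compl, Fintype.card_fin]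
  rw [h1]
  have h2 : (∑ V ∈ Tᶜ.powerset, (-1 : ℝ) ^ V.card)
      = ((∑ V ∈ Tᶜ.powerset, (-1 : ℤ) ^ V.card : ℤ) : ℝ) := by push_cast; rfl
  rw [h2, Finset.sum_powerset_neg_one_pow_card]
  by_cases hT : T = Finset.univ
  · simp [hT]
  · have : Tᶜ ≠ ∅ := by
      intro hc
      exact hT (by simpa using congrArg compl hc)
    simp [this, hT]

/-- Polarization: the alternating sum of volumes of `K + ∑_{i ∈ S} C i` equals `m! • MV C`,
independently of the extra body `K`. -/
lemma pol (h : IsMixedVolume MV) (K : ConvexBody E) (C : Fin m → ConvexBody E) :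
    ∑ S : Finset (Fin m), (-1 : ℝ) ^ (m - S.card)
        * (volume ((K : Set E) + ∑ i ∈ S, (C i : Set E))).toReal
      = (m.factorial : ℝ) * MV (fun i => (C i : Set E)) := by
  classical
  set M := mvMap h with hM
  set G : Finset (Fin m) → Option (Fin m) → ConvexBody E :=
    fun S o => Option.elim o K (fun i => if i ∈ S then C i else 0) with hG
  set T : (Fin m → Option (Fin m)) → Finset (Fin m) :=
    fun r => Finset.univ.filter (fun j => ∃ i, r i = some j) with hT
  -- Step 1: each volume is M of a sum of bodies
  have step1 : ∀ S : Finset (Fin m),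
      (volume ((K : Set E) + ∑ i ∈ S, (C i : Set E))).toReal
        = ∑ r : Fin m → Option (Fin m), M (fun i => G S (r i)) := by
    intro S
    have hcoe : ((K + ∑ i ∈ S, C i : ConvexBody E) : Set E)
        = (K : Set E) + ∑ i ∈ S, (C i : Set E) := by
      rw [ConvexBody.coe_add]
      congr 1
      exact map_sum cbHom C S
    have hbody := K + ∑ i ∈ S, C i
    rw [← hcoe, ← h.2.2 _ (K + ∑ i ∈ S, C i).convex (K + ∑ i ∈ S, C i).isCompact
      (K + ∑ i ∈ S, C i).nonempty]
    have hdecomp : (fun _ : Fin m => K + ∑ i ∈ S, C i)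
        = fun _ : Fin m => ∑ o : Option (Fin m), G S o := by
      funext _
      rw [Fintype.sum_option]
      simp only [hG, Option.elim]
      congr 1
      simp [Finset.sum_ite_mem]
    calc MV (fun _ : Fin m => ((K + ∑ i ∈ S, C i : ConvexBody E) : Set E))
        = M (fun _ : Fin m => K + ∑ i ∈ S, C i) := rfl
      _ = M (fun _ : Fin m => ∑ o : Option (Fin m), G S o) := by rw [hdecomp]
      _ = ∑ r : Fin m → Option (Fin m), M (fun i => G S (r i)) :=
          M.map_sum (fun _ o => G S o)
  -- Step 2: value of each summand
  have step2 : ∀ (r : Fin m → Option (Fin m)) (S : Finset (Fin m)),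
      M (fun i => G S (r i))
        = if T r ⊆ S then M (fun i => Option.elim (r i) K C) else 0 := by
    intro r S
    by_cases hTS : T r ⊆ S
    · rw [if_pos hTS]
      congr 1
      funext i
      cases hri : r i with
      | none => simp [hG]
      | some j =>
          have hj : j ∈ T r := by
            rw [hT, Finset.mem_filter]
            exact ⟨Finset.mem_univ _, ⟨i, hri⟩⟩
          simp [hG, hTS hj]
    · rw [if_neg hTS]
      obtain ⟨j, hjT, hjS⟩ := Finset.not_subset.mp hTS
      rw [hT, Finset.mem_filter] at hjT
      obtain ⟨i, hri⟩ := hjT.2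
      refine M.map_coord_zero i ?_
      simp [hG, hri, hjS]
  -- Step 3: swap sums and use the sign sum
  have step3 : ∑ S : Finset (Fin m), (-1 : ℝ) ^ (m - S.card)
        * (volume ((K : Set E) + ∑ i ∈ S, (C i : Set E))).toReal
      = ∑ r : Fin m → Option (Fin m),
          (if T r = Finset.univ then (1:ℝ) else 0) * M (fun i => Option.elim (r i) K C) := by
    calc ∑ S : Finset (Fin m), (-1 : ℝ) ^ (m - S.card)
          * (volume ((K : Set E) + ∑ i ∈ S, (C i : Set E))).toReal
        = ∑ S : Finset (Fin m), ∑ r : Fin m → Option (Fin m),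
            (-1 : ℝ) ^ (m - S.card) * M (fun i => G S (r i)) := by
          refine Finset.sum_congr rfl fun S _ => ?_
          rw [step1 S, Finset.mul_sum]
      _ = ∑ r : Fin m → Option (Fin m), ∑ S : Finset (Fin m),
            (-1 : ℝ) ^ (m - S.card) * M (fun i => G S (r i)) := Finset.sum_comm
      _ = ∑ r : Fin m → Option (Fin m),
            (∑ S ∈ Finset.univ.filter (fun S => T r ⊆ S), (-1 : ℝ) ^ (m - S.card))
              * M (fun i => Option.elim (r i) K C) := by
          refine Finset.sum_congr rfl fun r _ => ?_
          rw [Finset.sum_mul, Finset.sum_filter]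
          refine Finset.sum_congr rfl fun S _ => ?_
          rw [step2 r S]
          split_ifs <;> ring
      _ = _ := by
          refine Finset.sum_congr rfl fun r _ => ?_
          rw [signsum (T r)]
  rw [step3]
  -- Step 4: only surjections-onto-somes survive; they are the permutations
  have step4 : ∑ r : Fin m → Option (Fin m),
      (if T r = Finset.univ then (1:ℝ) else 0) * M (fun i => Option.elim (r i) K C)
      = ∑ r ∈ Finset.univ.filter (fun r : Fin m → Option (Fin m) => T r = Finset.univ),
          M (fun i => Option.elim (r i) K C) := by
    rw [Finset.sum_filter]
    refine Finset.sum_congr rfl fun r _ => ?_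
    split_ifs <;> ring
  rw [step4]
  have step5 : ∑ r ∈ Finset.univ.filter (fun r : Fin m → Option (Fin m) => T r = Finset.univ),
      M (fun i => Option.elim (r i) K C)
      = ∑ _σ : Equiv.Perm (Fin m), MV (fun i => (C i : Set E)) := by
    refine (Finset.sum_bij (fun (σ : Equiv.Perm (Fin m)) _ => fun i => some (σ i))
      ?_ ?_ ?_ ?_).symm
    · intro σ _
      rw [Finset.mem_filter]
      refine ⟨Finset.mem_univ _, ?_⟩
      rw [hT, Finset.eq_univ_iff_forall]
      intro j
      rw [Finset.mem_filter]
      exact ⟨Finset.mem_univ _, ⟨σ.symm j, by simp⟩⟩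
    · intro σ _ σ' _ hee
      apply Equiv.ext
      intro i
      have h6 : some (σ i) = some (σ' i) := congrFun hee i
      exact Option.some.inj h6
    · intro r hr
      rw [Finset.mem_filter, hT, Finset.eq_univ_iff_forall] at hr
      have hall : ∀ j : Fin m, ∃ i, r i = some j := by
        intro j
        have := hr.2 j
        rw [Finset.mem_filter] at this
        exact this.2
      choose c hc using hall
      have hcinj : Function.Injective c := by
        intro j j' e
        have h1 := hc j
        rw [e, hc j'] at h1
        exact (Option.some.inj h1).symm
      have hbij : Function.Bijective c := Finite.injective_iff_bijective.mp hcinj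
      refine ⟨(Equiv.ofBijective c hbij).symm, Finset.mem_univ _, ?_⟩
      funext i
      obtain ⟨j, rfl⟩ := hbij.2 i
      show some ((Equiv.ofBijective c hbij).symm (c j)) = r (c j)
      have h5 : (Equiv.ofBijective c hbij).symm (c j) = j :=
        (Equiv.ofBijective c hbij).symm_apply_apply j
      rw [h5, hc j]
    · intro σ _
      have : M (fun i => Option.elim (some (σ i)) K C) = MV ((fun i => (C i : Set E)) ∘ σ) := rfl
      rw [this, h.1 σ]
  rw [step5, Finset.sum_const, Finset.card_univ, Fintype.card_perm, Fintype.card_fin,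
    nsmul_eq_mul]

lemma prod_add_prod' {α β : Type*} [AddMonoid α] [AddMonoid β] (s s' : Set α) (t t' : Set β) :
    (s ×ˢ t) + (s' ×ˢ t') = (s + s') ×ˢ (t + t') := by
  ext z
  simp only [Set.mem_add, Set.mem_prod]
  constructor
  · rintro ⟨a, ⟨ha1, ha2⟩, b, ⟨hb1, hb2⟩, rfl⟩
    exact ⟨⟨a.1, ha1, b.1, hb1, rfl⟩, ⟨a.2, ha2, b.2, hb2, rfl⟩⟩
  · rintro ⟨⟨a1, ha1, b1, hb1, h1⟩, ⟨a2, ha2, b2, hb2, h2⟩⟩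
    refine ⟨(a1, a2), ⟨ha1, ha2⟩, (b1, b2), ⟨hb1, hb2⟩, ?_⟩
    rw [Prod.mk_add_mk, h1, h2]

/-- `X ↦ {0} ×ˢ X` as an `AddMonoidHom`. -/
def zprodHom (α β : Type*) [AddMonoid α] [AddMonoid β] : Set β →+ Set (α × β) where
  toFun X := ({0} : Set α) ×ˢ X
  map_zero' := by
    show ({0} : Set α) ×ˢ ({0} : Set β) = ({0} : Set (α × β))
    rw [Set.singleton_prod_singleton]
    rfl
  map_add' X Y := by
    show ({0} : Set α) ×ˢ (X + Y) = ({0} : Set α) ×ˢ X + ({0} : Set α) ×ˢ Y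
    rw [prod_add_prod']
    congr 1
    rw [Set.singleton_add_singleton, add_zero]

@[simp] lemma zprodHom_apply {α β : Type*} [AddMonoid α] [AddMonoid β] (X : Set β) :
    zprodHom α β X = ({0} : Set α) ×ˢ X := rfl

/-- `Prod.fst` image as an `AddMonoidHom` on sets. -/
def fstHom (α β : Type*) [AddMonoid α] [AddMonoid β] : Set (α × β) →+ Set α where
  toFun s := Prod.fst '' s
  map_zero' := by
    show Prod.fst '' ({0} : Set (α × β)) = ({0} : Set α)
    rw [Set.image_singleton]
    rfl
  map_add' s t := by
    show Prod.fst '' (s + t) = Prod.fst '' s + Prod.fst '' t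
    ext x
    simp only [Set.mem_add, Set.mem_image]
    constructor
    · rintro ⟨w, ⟨a, ha, b, hb, rfl⟩, rfl⟩
      exact ⟨a.1, ⟨a, ha, rfl⟩, b.1, ⟨b, hb, rfl⟩, rfl⟩
    · rintro ⟨x1, ⟨a, ha, rfl⟩, x2, ⟨b, hb, rfl⟩, rfl⟩
      exact ⟨a + b, ⟨a, ha, b, hb, rfl⟩, rfl⟩

@[simp] lemma fstHom_apply {α β : Type*} [AddMonoid α] [AddMonoid β] (s : Set (α × β)) :
    fstHom α β s = Prod.fst '' s := rfl

lemma slice_add {α β : Type*} [AddMonoid α] [AddMonoid β] (K : Set (α × β)) (L : Set β) (x : α) :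
    Prod.mk x ⁻¹' (K + ({0} : Set α) ×ˢ L) = (Prod.mk x ⁻¹' K) + L := by
  ext y
  simp only [Set.mem_preimage, Set.mem_add, Set.mem_prod, Set.mem_singleton_iff]
  constructor
  · rintro ⟨a, ha, b, ⟨hb1, hb2⟩, hab⟩
    have h1 : a.1 = x := by
      have := congrArg Prod.fst hab
      simpa [hb1] using this
    have h2 : a.2 + b.2 = y := congrArg Prod.snd hab
    refine ⟨a.2, ?_, b.2, hb2, h2⟩
    show (x, a.2) ∈ K
    rw [← h1]
    exact ha
  · rintro ⟨a2, ha, c, hc, rfl⟩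
    refine ⟨(x, a2), ha, (0, c), ⟨rfl, hc⟩, ?_⟩
    rw [Prod.mk_add_mk, add_zero]

lemma claimA {q p : ℕ} {MVq : (Fin q → Set (Fin q → ℝ)) → ℝ} (hq : IsMixedVolume MVq)
    (K : ConvexBody ((Fin p → ℝ) × (Fin q → ℝ))) (B : Fin q → ConvexBody (Fin q → ℝ)) :
    ∑ S : Finset (Fin q), (-1 : ℝ) ^ (q - S.card)
        * (volume ((K : Set ((Fin p → ℝ) × (Fin q → ℝ)))
            + ({0} : Set (Fin p → ℝ)) ×ˢ (∑ j ∈ S, (B j : Set (Fin q → ℝ))))).toReal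
      = (q.factorial : ℝ) * MVq (fun j => (B j : Set (Fin q → ℝ)))
          * (volume (Prod.fst '' (K : Set ((Fin p → ℝ) × (Fin q → ℝ))))).toReal := by
  classical
  set L : Finset (Fin q) → Set (Fin q → ℝ) := fun S => ∑ j ∈ S, (B j : Set (Fin q → ℝ)) with hL
  have hLbody : ∀ S, L S = ((∑ j ∈ S, B j : ConvexBody (Fin q → ℝ)) : Set (Fin q → ℝ)) :=
    fun S => (map_sum cbHom B S).symm
  set CS : Finset (Fin q) → Set ((Fin p → ℝ) × (Fin q → ℝ)) :=
    fun S => (K : Set ((Fin p → ℝ) × (Fin q → ℝ))) + ({0} : Set (Fin p → ℝ)) ×ˢ L S with hCS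
  have hCScompact : ∀ S, IsCompact (CS S) := by
    intro S
    refine K.isCompact.add ?_
    rw [hLbody S]
    exact isCompact_singleton.prod (ConvexBody.isCompact _)
  have hCSmeas : ∀ S, MeasurableSet (CS S) := fun S => (hCScompact S).isClosed.measurableSet
  set F : Finset (Fin q) → (Fin p → ℝ) → ENNReal := fun S x => volume (Prod.mk x ⁻¹' CS S)
    with hF
  have hFmeas : ∀ S, Measurable (F S) := fun S => measurable_measure_prodMk_left (hCSmeas S)
  have hvol : ∀ S, volume (CS S) = ∫⁻ x, F S x := by
    intro S
    rw [MeasureTheory.Measure.volume_eq_prod, MeasureTheory.Measure.prod_apply (hCSmeas S)]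
  have hlint : ∀ S, ∫⁻ x, F S x ≠ ⊤ := by
    intro S
    rw [← hvol]
    exact ((hCScompact S).measure_lt_top).ne
  have hInt : ∀ S, Integrable (fun x => (F S x).toReal) := fun S =>
    integrable_toReal_of_lintegral_ne_top (hFmeas S).aemeasurable (hlint S)
  have hIeq : ∀ S, ∫ x, (F S x).toReal = (volume (CS S)).toReal := by
    intro S
    rw [integral_toReal (hFmeas S).aemeasurable (ae_lt_top (hFmeas S) (hlint S)), ← hvol]
  have hfstmeas : MeasurableSet (Prod.fst '' (K : Set ((Fin p → ℝ) × (Fin q → ℝ)))) :=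
    (K.isCompact.image continuous_fst).isClosed.measurableSet
  -- pointwise identity
  have hpt : ∀ x, ∑ S : Finset (Fin q), (-1 : ℝ) ^ (q - S.card) * (F S x).toReal
      = Set.indicator (Prod.fst '' (K : Set ((Fin p → ℝ) × (Fin q → ℝ))))
          (fun _ => (q.factorial : ℝ) * MVq (fun j => (B j : Set (Fin q → ℝ)))) x := by
    intro x
    by_cases hx : x ∈ Prod.fst '' (K : Set ((Fin p → ℝ) × (Fin q → ℝ)))
    · rw [Set.indicator_of_mem hx]
      set Kx : Set (Fin q → ℝ) := Prod.mk x ⁻¹' (K : Set ((Fin p → ℝ) × (Fin q → ℝ))) with hKx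
      have hKxconv : Convex ℝ Kx := by
        intro y1 h1 y2 h2 a b ha hb hab
        have hmem := K.convex h1 h2 ha hb hab
        have e : a • ((x, y1) : (Fin p → ℝ) × (Fin q → ℝ)) + b • (x, y2)
            = (x, a • y1 + b • y2) := by
          rw [Prod.smul_mk, Prod.smul_mk, Prod.mk_add_mk, ← add_smul, hab, one_smul]
        show (x, a • y1 + b • y2) ∈ (K : Set ((Fin p → ℝ) × (Fin q → ℝ)))
        rw [← e]
        exact hmem
      have hKxcomp : IsCompact Kx :=
        IsCompact.of_isClosed_subset (K.isCompact.image continuous_snd)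
          (K.isClosed.preimage (Continuous.prodMk_right x)) (fun y hy => ⟨(x, y), hy, rfl⟩)
      have hKxne : Kx.Nonempty := by
        obtain ⟨a, haK, hax⟩ := hx
        refine ⟨a.2, ?_⟩
        show (x, a.2) ∈ (K : Set ((Fin p → ℝ) × (Fin q → ℝ)))
        rw [show ((x, a.2) : (Fin p → ℝ) × (Fin q → ℝ)) = a from Prod.ext hax.symm rfl]
        exact haK
      set Kxb : ConvexBody (Fin q → ℝ) := ⟨Kx, hKxconv, hKxcomp, hKxne⟩ with hKxb
      have hsl : ∀ S, F S x = volume ((Kxb : Set (Fin q → ℝ)) + ∑ j ∈ S, (B j : Set (Fin q → ℝ))) := by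
        intro S
        rw [hF]
        show volume (Prod.mk x ⁻¹' CS S) = _
        rw [hCS]
        show volume (Prod.mk x ⁻¹'
          ((K : Set ((Fin p → ℝ) × (Fin q → ℝ))) + ({0} : Set (Fin p → ℝ)) ×ˢ L S)) = _
        rw [slice_add]
        rfl
      calc ∑ S : Finset (Fin q), (-1 : ℝ) ^ (q - S.card) * (F S x).toReal
          = ∑ S : Finset (Fin q), (-1 : ℝ) ^ (q - S.card)
              * (volume ((Kxb : Set (Fin q → ℝ)) + ∑ j ∈ S, (B j : Set (Fin q → ℝ)))).toReal := by
            refine Finset.sum_congr rfl fun S _ => ?_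
            rw [hsl S]
        _ = (q.factorial : ℝ) * MVq (fun j => (B j : Set (Fin q → ℝ))) := pol hq Kxb B
    · rw [Set.indicator_of_notMem hx]
      have hz : ∀ S, F S x = 0 := by
        intro S
        have hempty : Prod.mk x ⁻¹' CS S = ∅ := by
          ext y
          simp only [Set.mem_preimage, Set.mem_empty_iff_false, iff_false]
          intro hy
          rw [hCS] at hy
          obtain ⟨a, ha, b, hb, hab⟩ := Set.mem_add.mp hy
          apply hx
          refine ⟨a, ha, ?_⟩
          have hb1 : b.1 = 0 := (Set.mem_prod.mp hb).1
          have := congrArg Prod.fst hab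
          simp only [Prod.fst_add, hb1, add_zero] at this
          exact this
        rw [hF]
        show volume (Prod.mk x ⁻¹' CS S) = 0
        rw [hempty]
        exact measure_empty
      simp [hz]
  -- combine
  calc ∑ S : Finset (Fin q), (-1 : ℝ) ^ (q - S.card) * (volume (CS S)).toReal
      = ∑ S : Finset (Fin q), ∫ x, (-1 : ℝ) ^ (q - S.card) * (F S x).toReal := by
        refine Finset.sum_congr rfl fun S _ => ?_
        rw [MeasureTheory.integral_const_mul, hIeq S]
    _ = ∫ x, ∑ S : Finset (Fin q), (-1 : ℝ) ^ (q - S.card) * (F S x).toReal :=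
        (integral_finset_sum _ (fun S _ => (hInt S).const_mul _)).symm
    _ = ∫ x, Set.indicator (Prod.fst '' (K : Set ((Fin p → ℝ) × (Fin q → ℝ))))
          (fun _ => (q.factorial : ℝ) * MVq (fun j => (B j : Set (Fin q → ℝ)))) x := by
        refine integral_congr_ae (Filter.Eventually.of_forall fun x => ?_)
        exact hpt x
    _ = (q.factorial : ℝ) * MVq (fun j => (B j : Set (Fin q → ℝ)))
          * (volume (Prod.fst '' (K : Set ((Fin p → ℝ) × (Fin q → ℝ))))).toReal := by
        rw [MeasureTheory.integral_indicator hfstmeas, MeasureTheory.setIntegral_const,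
          smul_eq_mul, measureReal_def]
        ring

end MixedVolAux
open MixedVolAux


/-- **Mixed volumes of polytopes lying in a subspace** (Lemma 1.6).
Realize `P = ℝᵖ × ℝ^q`, `Q = {0} × ℝ^q`, and `π = Prod.fst : P → P/Q ≅ ℝᵖ`
(a compatible choice of volume forms). For bounded convex polytopes
`A₁,…,A_p ⊆ P` and `B₁,…,B_q ⊆ ℝ^q` (viewed in `Q` as `{0} × B_j`),
`(p+q)! Vol(A₁,…,A_p,B₁,…,B_q) = p! q! Vol(πA₁,…,πA_p) · Vol(B₁,…,B_q)`. -/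
theorem stmt2 (p q : ℕ)
    (A : Fin p → Set ((Fin p → ℝ) × (Fin q → ℝ)))
    (B : Fin q → Set (Fin q → ℝ))
    (hA : ∀ i, Convex ℝ (A i) ∧ IsCompact (A i) ∧ (A i).Nonempty)
    (hApoly : ∀ i, ∃ V : Finset ((Fin p → ℝ) × (Fin q → ℝ)),
      A i = convexHull ℝ (V : Set ((Fin p → ℝ) × (Fin q → ℝ))))
    (hB : ∀ j, Convex ℝ (B j) ∧ IsCompact (B j) ∧ (B j).Nonempty)
    (hBpoly : ∀ j, ∃ V : Finset (Fin q → ℝ), B j = convexHull ℝ (V : Set (Fin q → ℝ)))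
    (MVpq : (Fin (p + q) → Set ((Fin p → ℝ) × (Fin q → ℝ))) → ℝ)
    (hMVpq : IsMixedVolume MVpq)
    (MVp : (Fin p → Set (Fin p → ℝ)) → ℝ) (hMVp : IsMixedVolume MVp)
    (MVq : (Fin q → Set (Fin q → ℝ)) → ℝ) (hMVq : IsMixedVolume MVq) :
    ((p + q).factorial : ℝ) *
        MVpq (Fin.append A (fun j => ({0} : Set (Fin p → ℝ)) ×ˢ B j))
      = (p.factorial : ℝ) * (q.factorial : ℝ) *
          MVp (fun i => Prod.fst '' A i) * MVq B := by
  classical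
  set CA : Fin p → ConvexBody ((Fin p → ℝ) × (Fin q → ℝ)) :=
    fun i => ⟨A i, (hA i).1, (hA i).2.1, (hA i).2.2⟩ with hCA
  set CB : Fin q → ConvexBody (Fin q → ℝ) :=
    fun j => ⟨B j, (hB j).1, (hB j).2.1, (hB j).2.2⟩ with hCB
  set CB' : Fin q → ConvexBody ((Fin p → ℝ) × (Fin q → ℝ)) := fun j =>
    ⟨({0} : Set (Fin p → ℝ)) ×ˢ B j, (convex_singleton 0).prod (hB j).1,
      isCompact_singleton.prod (hB j).2.1, (Set.singleton_nonempty 0).prod (hB j).2.2⟩ with hCB'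
  set CE : Fin (p + q) → ConvexBody ((Fin p → ℝ) × (Fin q → ℝ)) :=
    fun i => Sum.elim CA CB' (finSumFinEquiv.symm i) with hCEdef
  set CAp : Fin p → ConvexBody (Fin p → ℝ) := fun i =>
    ⟨Prod.fst '' A i, (hA i).1.linear_image (LinearMap.fst ℝ _ _),
      (hA i).2.1.image continuous_fst, (hA i).2.2.image _⟩ with hCAp
  -- the two polarization identities
  have hpol1 := pol hMVpq 0 CE
  have hpol2 := pol hMVp 0 CAp
  simp only [ConvexBody.coe_zero, zero_add] at hpol1 hpol2
  -- identify the argument of MVpq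
  have hcoeCE : (fun i => (CE i : Set ((Fin p → ℝ) × (Fin q → ℝ))))
      = Fin.append A (fun j => ({0} : Set (Fin p → ℝ)) ×ˢ B j) := by
    funext i
    refine Fin.addCases (fun i => ?_) (fun j => ?_) i
    · rw [hCEdef]
      simp only [finSumFinEquiv_symm_apply_castAdd, Sum.elim_inl, Fin.append_left]
      rfl
    · rw [hCEdef]
      simp only [finSumFinEquiv_symm_apply_natAdd, Sum.elim_inr, Fin.append_right]
      rfl
  set f : Finset (Fin (p + q)) → ℝ := fun S => (-1 : ℝ) ^ (p + q - S.card)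
      * (volume (∑ i ∈ S, (CE i : Set ((Fin p → ℝ) × (Fin q → ℝ))))).toReal with hf
  -- reindex the big sum
  set e2 : Finset (Fin p) × Finset (Fin q) ≃ Finset (Fin p ⊕ Fin q) :=
    { toFun := fun st => st.1.disjSum st.2
      invFun := fun u => (u.toLeft, u.toRight)
      left_inv := by intro st; simp
      right_inv := fun u => Finset.toLeft_disjSum_toRight } with he2
  have hre1 : ∑ S : Finset (Fin (p + q)), f S
      = ∑ st : Finset (Fin p) × Finset (Fin q),
          f (((st.1.disjSum st.2)).map finSumFinEquiv.toEmbedding) := by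
    refine (Fintype.sum_equiv (e2.trans finSumFinEquiv.finsetCongr) _ _ ?_).symm
    intro st
    rfl
  -- evaluate each term
  have hterm : ∀ (S1 : Finset (Fin p)) (S2 : Finset (Fin q)),
      f (((S1.disjSum S2)).map finSumFinEquiv.toEmbedding)
        = ((-1 : ℝ) ^ (p - S1.card)) *
            ((-1 : ℝ) ^ (q - S2.card) *
              (volume (((∑ i ∈ S1, CA i : ConvexBody _) : Set ((Fin p → ℝ) × (Fin q → ℝ)))
                + ({0} : Set (Fin p → ℝ)) ×ˢ (∑ j ∈ S2, (CB j : Set (Fin q → ℝ))))).toReal) := by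
    intro S1 S2
    have hcard : (((S1.disjSum S2)).map finSumFinEquiv.toEmbedding).card
        = S1.card + S2.card := by
      rw [Finset.card_map, Finset.card_disjSum]
    have hsum : ∑ i ∈ ((S1.disjSum S2)).map finSumFinEquiv.toEmbedding,
        (CE i : Set ((Fin p → ℝ) × (Fin q → ℝ)))
        = ((∑ i ∈ S1, CA i : ConvexBody _) : Set ((Fin p → ℝ) × (Fin q → ℝ)))
            + ({0} : Set (Fin p → ℝ)) ×ˢ (∑ j ∈ S2, (CB j : Set (Fin q → ℝ))) := by
      rw [Finset.sum_map]
      have hx : ∀ x : Fin p ⊕ Fin q,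
          ((CE (finSumFinEquiv.toEmbedding x)) : Set ((Fin p → ℝ) × (Fin q → ℝ)))
            = Sum.elim (fun i => (CA i : Set ((Fin p → ℝ) × (Fin q → ℝ))))
                (fun j => ({0} : Set (Fin p → ℝ)) ×ˢ B j) x := by
        intro x
        have h1 : CE (finSumFinEquiv.toEmbedding x) = Sum.elim CA CB' x := by
          rw [hCEdef]
          show Sum.elim CA CB' (finSumFinEquiv.symm (finSumFinEquiv x)) = Sum.elim CA CB' x
          rw [Equiv.symm_apply_apply]
        rw [h1]
        cases x with
        | inl i => rfl
        | inr j => rfl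
      calc ∑ x ∈ S1.disjSum S2,
            ((CE (finSumFinEquiv.toEmbedding x)) : Set ((Fin p → ℝ) × (Fin q → ℝ)))
          = ∑ x ∈ S1.disjSum S2, Sum.elim (fun i => (CA i : Set ((Fin p → ℝ) × (Fin q → ℝ))))
              (fun j => ({0} : Set (Fin p → ℝ)) ×ˢ B j) x :=
            Finset.sum_congr rfl fun x _ => hx x
        _ = (∑ i ∈ S1, (CA i : Set ((Fin p → ℝ) × (Fin q → ℝ))))
              + ∑ j ∈ S2, ({0} : Set (Fin p → ℝ)) ×ˢ B j := Finset.sum_sumElim _ _ _ _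
        _ = _ := by
            congr 1
            · exact (map_sum cbHom CA S1).symm
            · have hz : ∑ j ∈ S2, ({0} : Set (Fin p → ℝ)) ×ˢ B j
                  = ({0} : Set (Fin p → ℝ)) ×ˢ (∑ j ∈ S2, (CB j : Set (Fin q → ℝ))) :=
                (map_sum (zprodHom (Fin p → ℝ) (Fin q → ℝ)) B S2).symm
              exact hz
    have hsign : (-1 : ℝ) ^ (p + q - (S1.card + S2.card))
        = (-1 : ℝ) ^ (p - S1.card) * (-1 : ℝ) ^ (q - S2.card) := by
      have h1 : S1.card ≤ p := by simpa using Finset.card_le_univ S1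
      have h2 : S2.card ≤ q := by simpa using Finset.card_le_univ S2
      rw [← pow_add]
      congr 1
      omega
    rw [hf]
    simp only [hcard, hsum, hsign]
    ring
  -- put everything together
  have hmain : ∑ S : Finset (Fin (p + q)), f S
      = (q.factorial : ℝ) * MVq B
          * ((p.factorial : ℝ) * MVp (fun i => Prod.fst '' A i)) := by
    rw [hre1, Fintype.sum_prod_type]
    calc ∑ S1 : Finset (Fin p), ∑ S2 : Finset (Fin q),
          f (((S1.disjSum S2)).map finSumFinEquiv.toEmbedding)
        = ∑ S1 : Finset (Fin p), ((-1 : ℝ) ^ (p - S1.card)) *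
            ∑ S2 : Finset (Fin q), (-1 : ℝ) ^ (q - S2.card) *
              (volume (((∑ i ∈ S1, CA i : ConvexBody _) : Set ((Fin p → ℝ) × (Fin q → ℝ)))
                + ({0} : Set (Fin p → ℝ)) ×ˢ (∑ j ∈ S2, (CB j : Set (Fin q → ℝ))))).toReal := by
          refine Finset.sum_congr rfl fun S1 _ => ?_
          rw [Finset.mul_sum]
          exact Finset.sum_congr rfl fun S2 _ => hterm S1 S2
      _ = ∑ S1 : Finset (Fin p), ((-1 : ℝ) ^ (p - S1.card)) *
            ((q.factorial : ℝ) * MVq B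
              * (volume (Prod.fst ''
                  ((∑ i ∈ S1, CA i : ConvexBody _) : Set ((Fin p → ℝ) × (Fin q → ℝ))))).toReal) := by
          refine Finset.sum_congr rfl fun S1 _ => ?_
          congr 1
          have hclaim := claimA hMVq (∑ i ∈ S1, CA i) CB
          have hargq : (fun j => (CB j : Set (Fin q → ℝ))) = B := rfl
          rw [hargq] at hclaim
          exact hclaim
      _ = (q.factorial : ℝ) * MVq B * ∑ S1 : Finset (Fin p), ((-1 : ℝ) ^ (p - S1.card)) *
            (volume (∑ i ∈ S1, (CAp i : Set (Fin p → ℝ)))).toReal := by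
          rw [Finset.mul_sum]
          refine Finset.sum_congr rfl fun S1 _ => ?_
          have hcs : ((∑ i ∈ S1, CA i : ConvexBody _) : Set ((Fin p → ℝ) × (Fin q → ℝ)))
              = ∑ i ∈ S1, (CA i : Set ((Fin p → ℝ) × (Fin q → ℝ))) := map_sum cbHom CA S1
          have hfs : Prod.fst '' (∑ i ∈ S1, (CA i : Set ((Fin p → ℝ) × (Fin q → ℝ))))
              = ∑ i ∈ S1, Prod.fst '' (CA i : Set ((Fin p → ℝ) × (Fin q → ℝ))) :=
            map_sum (fstHom (Fin p → ℝ) (Fin q → ℝ))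
              (fun i => ((CA i : Set ((Fin p → ℝ) × (Fin q → ℝ))))) S1
          rw [hcs, hfs]
          ring_nf
          rfl
      _ = _ := by
          rw [hpol2]
          rfl
  -- conclude
  have hMVarg : MVpq (Fin.append A (fun j => ({0} : Set (Fin p → ℝ)) ×ˢ B j))
      = MVpq (fun i => (CE i : Set ((Fin p → ℝ) × (Fin q → ℝ)))) :=
    congrArg MVpq hcoeCE.symm
  rw [hMVarg, ← hpol1, hmain]
  ring
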